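/- Let ψ : ℝ⁺ → ℝ⁺ be a softening function, s > 0, and suppose 0 ≤ ℓ(h,z) ≤ K(h) for all z. Then for every h: R(h) - R_{ψ,s}(h) ≤ K(h)·1{K(h) ≥ s}, where R(h) = E_{z∼μ}[ℓ(h,z)] and R_{ψ,s}(h) = E_{z∼μ}[s·ψ(ℓ(h,z)/s)]. Consequently, integrating over h against any probability measure Q with E_{h∼Q}[K(h)] < ∞: E_{h∼Q}[R(h)] ≤ E_{h∼Q}[R_{ψ,s}(h)] + E_{h∼Q}[K(h)·1{K(h) ≥ s}]. -/
import Mathlib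


open MeasureTheory

/-- softening comparison lemma. For a softening function ψ and s > 0,
R(h) - R_{ψ,s}(h) ≤ K(h)·1{K(h) ≥ s} for every h; integrating against any probability
measure Q with E_Q[K] < ∞ gives E_Q[R] ≤ E_Q[R_{ψ,s}] + E_Q[K·1{K ≥ s}]. -/
theorem statement6 {Z : Type*} [MeasurableSpace Z] {H : Type*} [MeasurableSpace H]
    (μ : Measure Z) [IsProbabilityMeasure μ]
    (ℓ : H → Z → ℝ) (K : H → ℝ) (ψ : ℝ → ℝ) (s : ℝ) (hs : 0 < s)
    (hmeas : Measurable (Function.uncurry ℓ)) (hKmeas : Measurable K)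
    (hψmeas : Measurable ψ)
    (hψid : ∀ x ∈ Set.Icc (0 : ℝ) 1, ψ x = x)
    (hψmono : MonotoneOn ψ (Set.Ici (0 : ℝ)))
    (hψle : ∀ x ≥ (1 : ℝ), ψ x ≤ x)
    (hψpos : ∀ x ≥ (0 : ℝ), 0 ≤ ψ x)
    (hℓpos : ∀ h z, 0 ≤ ℓ h z) (hℓK : ∀ h z, ℓ h z ≤ K h) :
    (∀ h : H,
      (∫ z, ℓ h z ∂μ) - (∫ z, s * ψ (ℓ h z / s) ∂μ)
        ≤ (if s ≤ K h then K h else 0)) ∧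
    (∀ Q : Measure H, IsProbabilityMeasure Q → Integrable K Q →
      (∫ h, ∫ z, ℓ h z ∂μ ∂Q)
        ≤ (∫ h, ∫ z, s * ψ (ℓ h z / s) ∂μ ∂Q)
          + ∫ h, (if s ≤ K h then K h else 0) ∂Q) := by
  -- basic measurability facts
  have hmeasz : ∀ h : H, Measurable (fun z => ℓ h z) := fun h =>
    hmeas.comp measurable_prodMk_left
  have hmeaszψ : ∀ h : H, Measurable (fun z => s * ψ (ℓ h z / s)) := fun h =>
    (hψmeas.comp ((hmeasz h).div_const s)).const_mul s
  -- pointwise bounds for the softened loss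
  have hψbound : ∀ h z, s * ψ (ℓ h z / s) ≤ K h + s := by
    intro h z
    rcases le_or_gt (ℓ h z / s) 1 with hy | hy
    · rw [hψid _ ⟨div_nonneg (hℓpos h z) hs.le, hy⟩]
      rw [mul_div_cancel₀ _ hs.ne']
      nlinarith [hℓK h z, hℓpos h z]
    · have := hψle _ hy.le
      have h2 : s * ψ (ℓ h z / s) ≤ s * (ℓ h z / s) := by nlinarith
      rw [mul_div_cancel₀ _ hs.ne'] at h2
      nlinarith [hℓK h z]
  have hψnn : ∀ h z, 0 ≤ s * ψ (ℓ h z / s) := fun h z =>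
    mul_nonneg hs.le (hψpos _ (div_nonneg (hℓpos h z) hs.le))
  -- integrability in z
  have hint1 : ∀ h : H, Integrable (fun z => ℓ h z) μ := by
    intro h
    refine Integrable.mono' (integrable_const (K h)) (hmeasz h).aestronglyMeasurable
      (Filter.Eventually.of_forall fun z => ?_)
    rw [Real.norm_eq_abs, abs_of_nonneg (hℓpos h z)]; exact hℓK h z
  have hint2 : ∀ h : H, Integrable (fun z => s * ψ (ℓ h z / s)) μ := by
    intro h
    refine Integrable.mono' (integrable_const (K h + s)) (hmeaszψ h).aestronglyMeasurable
      (Filter.Eventually.of_forall fun z => ?_)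
    rw [Real.norm_eq_abs, abs_of_nonneg (hψnn h z)]; exact hψbound h z
  -- part 1
  have part1 : ∀ h : H,
      (∫ z, ℓ h z ∂μ) - (∫ z, s * ψ (ℓ h z / s) ∂μ) ≤ (if s ≤ K h then K h else 0) := by
    intro h
    by_cases hc : s ≤ K h
    · simp only [if_pos hc]
      have h1 : (∫ z, ℓ h z ∂μ) ≤ K h := by
        calc (∫ z, ℓ h z ∂μ) ≤ ∫ _, K h ∂μ :=
          integral_mono (hint1 h) (integrable_const _) (fun z => hℓK h z)
        _ = K h := by simp
      have h2 : 0 ≤ ∫ z, s * ψ (ℓ h z / s) ∂μ :=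
        integral_nonneg fun z => hψnn h z
      linarith
    · simp only [if_neg hc]
      push_neg at hc
      have : ∀ z, s * ψ (ℓ h z / s) = ℓ h z := by
        intro z
        have h1 : ℓ h z / s ≤ 1 := by
          rw [div_le_one hs]; linarith [hℓK h z]
        rw [hψid _ ⟨div_nonneg (hℓpos h z) hs.le, h1⟩, mul_div_cancel₀ _ hs.ne']
      simp only [this, sub_self, le_refl]
  refine ⟨part1, fun Q hQ hKQ => ?_⟩
  -- measurability/integrability over Q
  have hg1m : StronglyMeasurable (fun h => ∫ z, ℓ h z ∂μ) :=
    hmeas.stronglyMeasurable.integral_prod_right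
  have hg2m : StronglyMeasurable (fun h => ∫ z, s * ψ (ℓ h z / s) ∂μ) := by
    have : Measurable (Function.uncurry fun h z => s * ψ (ℓ h z / s)) :=
      (hψmeas.comp (hmeas.div_const s)).const_mul s
    exact this.stronglyMeasurable.integral_prod_right
  have hg1int : Integrable (fun h => ∫ z, ℓ h z ∂μ) Q := by
    refine Integrable.mono' hKQ hg1m.aestronglyMeasurable
      (Filter.Eventually.of_forall fun h => ?_)
    rw [Real.norm_eq_abs, abs_of_nonneg (integral_nonneg fun z => hℓpos h z)]
    calc (∫ z, ℓ h z ∂μ) ≤ ∫ _, K h ∂μ :=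
      integral_mono (hint1 h) (integrable_const _) (fun z => hℓK h z)
    _ = K h := by simp
  have hg2int : Integrable (fun h => ∫ z, s * ψ (ℓ h z / s) ∂μ) Q := by
    refine Integrable.mono' (hKQ.add (integrable_const s)) hg2m.aestronglyMeasurable
      (Filter.Eventually.of_forall fun h => ?_)
    rw [Real.norm_eq_abs, abs_of_nonneg (integral_nonneg fun z => hψnn h z)]
    calc (∫ z, s * ψ (ℓ h z / s) ∂μ) ≤ ∫ _, K h + s ∂μ :=
      integral_mono (hint2 h) (integrable_const _) (fun z => hψbound h z)
    _ = K h + s := by simp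
  have hg3int : Integrable (fun h => (if s ≤ K h then K h else 0)) Q := by
    refine Integrable.mono' hKQ.abs
      (Measurable.aestronglyMeasurable ?_)
      (Filter.Eventually.of_forall fun h => ?_)
    · exact Measurable.ite (measurableSet_le measurable_const hKmeas) hKmeas measurable_const
    · by_cases hc : s ≤ K h
      · simp only [if_pos hc, Real.norm_eq_abs]; exact le_rfl
      · simp [if_neg hc, abs_nonneg]
  calc (∫ h, ∫ z, ℓ h z ∂μ ∂Q)
      ≤ ∫ h, ((∫ z, s * ψ (ℓ h z / s) ∂μ) + (if s ≤ K h then K h else 0)) ∂Q :=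
        integral_mono hg1int (hg2int.add hg3int) (fun h => by
          show _ ≤ (∫ z, s * ψ (ℓ h z / s) ∂μ) + (if s ≤ K h then K h else 0)
          linarith [part1 h])
    _ = (∫ h, ∫ z, s * ψ (ℓ h z / s) ∂μ ∂Q) + ∫ h, (if s ≤ K h then K h else 0) ∂Q :=
        integral_add hg2int hg3int
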